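/- For every prime ideal x of A_I, the composite of the diagonal ring homomorphism A → A_I with the localization map A_I → A_{I,x} is an isomorphism of rings A ≅ A_{I,x}. -/

import Mathlib

/-!
STATEMENT 4: Fix a prime `p`. Let `A` be a commutative local ring of finite cardinality and
characteristic `p`. For an index set `I`, let `A_I = ∏_{i∈I} A`, and for a prime ideal `x` of
`A_I` let `A_{I,x}` denote the localization of `A_I` at `x`. Then for every prime ideal `x` of
`A_I`, the composite of the diagonal ring homomorphism `A → A_I` with the localization map
`A_I → A_{I,x}` is an isomorphism of rings `A ≅ A_{I,x}`.
-/

lemma stmt4_nilp (A : Type) [CommRing A] [Finite A] [IsLocalRing A] (a : A) (ha : ¬ IsUnit a) :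
    ∃ n, 0 < n ∧ a ^ n = 0 := by
  obtain ⟨m, n, hmn, h⟩ := Finite.exists_ne_map_eq_of_infinite (fun n : ℕ => a ^ (n + 1))
  wlog hlt : m < n generalizing m n
  · exact this n m hmn.symm h.symm (by omega)
  have h2 : a ^ (m + 1) * (1 - a ^ (n - m)) = 0 := by
    have : a ^ (n + 1) = a ^ (m + 1) * a ^ (n - m) := by
      rw [← pow_add]; congr 1; omega
    rw [mul_sub, mul_one, ← this, h]; ring
  have hu : IsUnit (1 - a ^ (n - m)) := by
    apply IsLocalRing.isUnit_one_sub_self_of_mem_nonunits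
    intro hc
    exact ha ((isUnit_pow_iff (by omega)).mp hc)
  exact ⟨m + 1, by omega, by
    have := mul_eq_zero_of_left h2 (hu.unit⁻¹ : Aˣ)
    rwa [mul_assoc, IsUnit.mul_val_inv, mul_one] at this⟩

open Classical in
lemma stmt4_key (A : Type) [CommRing A] [Finite A] (I : Type) (x : Ideal (I → A)) [x.IsPrime]
    (f : I → A) :
    ∃ (a : A) (e : I → A), e ∉ x ∧ e * f = e * (fun _ => a) ∧ ∀ i, e i = 0 ∨ e i = 1 := by
  have := Fintype.ofFinite A
  by_contra hcon
  push_neg at hcon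
  have hmem : ∀ a : A, (fun i => if f i = a then (1:A) else 0) ∈ x := by
    intro a
    by_contra hx
    obtain ⟨i, h0, h1⟩ := hcon a _ hx (by funext i; by_cases h : f i = a <;> simp [h])
    by_cases h : f i = a <;> simp [h] at h0 h1
  have hsum : (∑ a : A, fun i => if f i = a then (1:A) else 0) = 1 := by
    funext i
    simp [Finset.sum_apply, Finset.sum_ite_eq]
  have : (1 : I → A) ∈ x := hsum ▸ Ideal.sum_mem x (fun a _ => hmem a)
  exact (Ideal.IsPrime.ne_top ‹x.IsPrime›) (Ideal.eq_top_iff_one x |>.mpr this)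

/-- If `s ∉ x` and `e * s = e * const a` with `e ∉ x`, then `a` is a unit. -/
lemma stmt4_unit (A : Type) [CommRing A] [Finite A] [IsLocalRing A] (I : Type)
    (x : Ideal (I → A)) [x.IsPrime] (s e : I → A) (a : A) (hs : s ∉ x) (he : e ∉ x)
    (heq : e * s = e * (fun _ => a)) : IsUnit a := by
  by_contra ha
  obtain ⟨n, hn, han⟩ := stmt4_nilp A a ha
  have hpow : ∀ k : ℕ, e * s ^ k = e * (fun _ => a ^ k) := by
    intro k
    induction k with
    | zero => funext i; simp
    | succ k ih =>
      calc e * s ^ (k + 1) = (e * s) * s ^ k := by ring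
        _ = (fun _ => a) * (e * s ^ k) := by rw [heq]; ring
        _ = (fun _ => a) * (e * (fun _ => a ^ k)) := by rw [ih]
        _ = e * (fun _ => a ^ (k + 1)) := by
            funext i; simp [mul_comm, mul_assoc, pow_succ, mul_left_comm]
  have h0 : e * s ^ n = 0 := by
    rw [hpow n]
    funext i
    simp [han]
  have : s ^ n ∈ x := by
    rcases (Ideal.IsPrime.mem_or_mem ‹x.IsPrime› (h0 ▸ x.zero_mem)) with h | h
    · exact absurd h he
    · exact h
  exact hs (Ideal.IsPrime.mem_of_pow_mem ‹x.IsPrime› n this)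

theorem stmt_4
    (p : ℕ) (hp : p.Prime)
    (A : Type) [CommRing A] [Finite A] [IsLocalRing A] [CharP A p]
    (I : Type) (x : Ideal (I → A)) [x.IsPrime] :
    Function.Bijective
      ((algebraMap (I → A) (Localization.AtPrime x)).comp (Pi.constRingHom I A)) := by
  set L := Localization.AtPrime x
  set ψ := (algebraMap (I → A) L).comp (Pi.constRingHom I A) with hψ
  constructor
  · rw [injective_iff_map_eq_zero]
    intro b hb
    have hb' : algebraMap (I → A) L (fun _ => b) = 0 := hb
    rw [IsLocalization.map_eq_zero_iff x.primeCompl] at hb'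
    obtain ⟨⟨s, hs⟩, hsb⟩ := hb'
    obtain ⟨a, e, he, heq, h01⟩ := stmt4_key A I x s
    have ha : IsUnit a := stmt4_unit A I x s e a hs he heq
    have h0 : e * (fun _ => a * b) = 0 := by
      calc e * (fun _ => a * b) = (e * (fun _ => a)) * (fun _ => b) := by
            funext i; simp [mul_assoc]
        _ = (e * s) * (fun _ => b) := by rw [heq]
        _ = e * (s * (fun _ => b)) := by ring
        _ = 0 := by rw [show s * (fun _ => b) = 0 from hsb]; ring
    have hene : e ≠ 0 := fun h => he (h ▸ x.zero_mem)
    obtain ⟨i, hi⟩ := Function.ne_iff.mp hene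
    have hei : e i = 1 := (h01 i).resolve_left hi
    have : a * b = 0 := by
      have := congrFun h0 i
      simpa [hei] using this
    exact (IsUnit.mul_right_eq_zero ha).mp this
  · intro y
    obtain ⟨⟨f, s⟩, hy⟩ := IsLocalization.mk'_surjective x.primeCompl y
    obtain ⟨af, ef, hef, heqf, _⟩ := stmt4_key A I x f
    obtain ⟨as, es, hes, heqs, _⟩ := stmt4_key A I x (s : I → A)
    have has : IsUnit as := stmt4_unit A I x s es as s.2 hes heqs
    have Ef : algebraMap (I → A) L f = algebraMap (I → A) L (fun _ => af) :=
      (IsLocalization.eq_iff_exists x.primeCompl L).mpr ⟨⟨ef, hef⟩, heqf⟩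
    have Es : algebraMap (I → A) L s = algebraMap (I → A) L (fun _ => as) :=
      (IsLocalization.eq_iff_exists x.primeCompl L).mpr ⟨⟨es, hes⟩, heqs⟩
    refine ⟨af * ↑has.unit⁻¹, ?_⟩
    have hsu : IsUnit (algebraMap (I → A) L s) := IsLocalization.map_units L s
    apply hsu.mul_right_cancel
    rw [← hy, IsLocalization.mk'_spec]
    have h1 : ψ (af * ↑has.unit⁻¹) = algebraMap (I → A) L (fun _ => af * ↑has.unit⁻¹) := rfl
    rw [h1, Es, ← map_mul, Ef]
    congr 1
    funext i
    simp [mul_assoc, IsUnit.val_inv_mul]
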